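/- arXiv:2306.12394 — 4 statements merged into one kernel-verified Lean document; each statement's English description precedes it below -/
import Mathlib

section
/- Let H, J ≥ 1, M_h > 0 for each h, N = ∑_h M_h, and suppose S_{h,j}² = S_{h}² depends only on h (within-block homoscedasticity). Then among allocations with M_{h,j} > 0 and ∑_j M_{h,j} = M_h, the product ∏_{j=1}^J ∑_{h=1}^H (M_h²/N²)·S_h²/M_{h,j} is minimized by the balanced allocation M_{h,j} = M_h/J. -/
/-- D-optimality for block designs under within-block homoscedasticity:
the balanced allocation M_{h,j} = M_h/J minimizes
∏_j ∑_h (M_h²/N²)·S_h²/M_{h,j}. -/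
theorem stmt_8 (H J : ℕ) (hH : 1 ≤ H) (hJ : 1 ≤ J)
    (M : Fin H → ℝ) (hM : ∀ h, 0 < M h)
    (S : Fin H → ℝ) (hS : ∀ h, 0 < S h)
    (N : ℝ) (hN : N = ∑ h, M h)
    (Mm : Fin H → Fin J → ℝ) (hMm : ∀ h j, 0 < Mm h j)
    (hrow : ∀ h, ∑ j, Mm h j = M h) :
    (∏ j : Fin J, ∑ h, (M h) ^ 2 / N ^ 2 * (S h) ^ 2 / (M h / J)) ≤
      ∏ j, ∑ h, (M h) ^ 2 / N ^ 2 * (S h) ^ 2 / Mm h j := by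
  have hHne : Nonempty (Fin H) := ⟨⟨0, hH⟩⟩
  have hJ0 : (J : ℝ) ≠ 0 := by positivity
  have hN0 : 0 < N := by
    rw [hN]; exact Finset.sum_pos (fun h _ => hM h) Finset.univ_nonempty
  set c : Fin H → ℝ := fun h => (M h) ^ 2 / N ^ 2 * (S h) ^ 2 with hc
  have hcpos : ∀ h, 0 < c h := fun h => by
    have := hM h; have := hS h; positivity
  set p : ℝ := (J : ℝ)⁻¹ with hp
  have hppos : 0 < p := by positivity
  have hpJ : p * (J : ℝ) = 1 := inv_mul_cancel₀ hJ0
  set x : Fin J → ℝ := fun j => ∑ h, c h / Mm h j with hx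
  have hxpos : ∀ j, 0 < x j :=
    fun j => Finset.sum_pos (fun h _ => div_pos (hcpos h) (hMm h j)) Finset.univ_nonempty
  -- Step B: for each h, c h / (M h / J) ≤ ∏_j (c h / Mm h j)^p
  have stepB : ∀ h, c h / (M h / J) ≤ ∏ j, (c h / Mm h j) ^ p := by
    intro h
    have hQ : ∏ j, (Mm h j) ^ p ≤ M h / J := by
      have := Real.geom_mean_le_arith_mean_weighted Finset.univ (fun _ : Fin J => p)
        (Mm h) (fun _ _ => hppos.le) (by simp [hp, hJ0]) (fun j _ => (hMm h j).le)
      calc ∏ j, (Mm h j) ^ p ≤ ∑ j, p * Mm h j := this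
        _ = M h / J := by rw [← Finset.mul_sum, hrow h, hp]; ring
    have hQpos : 0 < ∏ j, (Mm h j) ^ p :=
      Finset.prod_pos (fun j _ => Real.rpow_pos_of_pos (hMm h j) p)
    have hnum : ∏ j, (c h / Mm h j) ^ p = c h / ∏ j, (Mm h j) ^ p := by
      rw [Finset.prod_congr rfl (fun j _ => Real.div_rpow (hcpos h).le (hMm h j).le p),
        Finset.prod_div_distrib, Finset.prod_const, Finset.card_univ, Fintype.card_fin,
        ← Real.rpow_natCast ((c h) ^ p) J, ← Real.rpow_mul (hcpos h).le, hpJ,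
        Real.rpow_one]
    rw [hnum]
    exact div_le_div_of_nonneg_left (hcpos h).le hQpos hQ  -- maybe wrong name
  -- Step A (Mahler): ∑_h ∏_j (c h / Mm h j)^p ≤ ∏_j (x j)^p
  have stepA : ∑ h, ∏ j, (c h / Mm h j) ^ p ≤ ∏ j, (x j) ^ p := by
    have key : ∀ h, ∏ j, (c h / Mm h j) ^ p ≤ (∑ j, p * ((c h / Mm h j) / x j)) * ∏ j, (x j) ^ p := by
      intro h
      have := Real.geom_mean_le_arith_mean_weighted Finset.univ (fun _ : Fin J => p)
        (fun j => (c h / Mm h j) / x j) (fun _ _ => hppos.le) (by simp [hp, hJ0])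
        (fun j _ => div_nonneg (div_pos (hcpos h) (hMm h j)).le (hxpos j).le)
      have hrw : ∏ j, ((c h / Mm h j) / x j) ^ p
          = (∏ j, (c h / Mm h j) ^ p) / ∏ j, (x j) ^ p := by
        rw [← Finset.prod_div_distrib]
        exact Finset.prod_congr rfl (fun j _ => Real.div_rpow (div_pos (hcpos h) (hMm h j)).le (hxpos j).le p)
      rw [hrw, div_le_iff₀ (Finset.prod_pos fun j _ => Real.rpow_pos_of_pos (hxpos j) p)] at this
      exact this
    calc ∑ h, ∏ j, (c h / Mm h j) ^ p
        ≤ ∑ h, (∑ j, p * ((c h / Mm h j) / x j)) * ∏ j, (x j) ^ p :=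
          Finset.sum_le_sum (fun h _ => key h)
      _ = (∑ h, ∑ j, p * ((c h / Mm h j) / x j)) * ∏ j, (x j) ^ p := by
          rw [Finset.sum_mul]
      _ = 1 * ∏ j, (x j) ^ p := by
          congr 1
          rw [Finset.sum_comm]
          have : ∀ j : Fin J, ∑ h, p * ((c h / Mm h j) / x j) = p := by
            intro j
            rw [← Finset.mul_sum]
            have : ∑ h, (c h / Mm h j) / x j = 1 := by
              rw [← Finset.sum_div, div_self (hxpos j).ne']
            rw [this, mul_one]
          rw [Finset.sum_congr rfl (fun j _ => this j), Finset.sum_const,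
            Finset.card_univ, Fintype.card_fin, nsmul_eq_mul, mul_comm, hpJ]
      _ = ∏ j, (x j) ^ p := one_mul _
  -- combine
  have hsum : ∑ h, c h / (M h / J) ≤ ∏ j, (x j) ^ p :=
    le_trans (Finset.sum_le_sum (fun h _ => stepB h)) stepA
  have hlhs : (∏ j : Fin J, ∑ h, c h / (M h / J)) = (∑ h, c h / (M h / J)) ^ J := by
    rw [Finset.prod_const, Finset.card_univ, Fintype.card_fin]
  have hrhs : (∏ j, (x j) ^ p) ^ J = ∏ j, x j := by
    rw [← Finset.prod_pow]
    exact Finset.prod_congr rfl (fun j _ => by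
      rw [← Real.rpow_natCast ((x j) ^ p) J, ← Real.rpow_mul (hxpos j).le, hpJ,
        Real.rpow_one])
  calc (∏ j : Fin J, ∑ h, c h / (M h / J)) = (∑ h, c h / (M h / J)) ^ J := hlhs
    _ ≤ (∏ j, (x j) ^ p) ^ J := by
        apply pow_le_pow_left₀ ?_ hsum _
        exact Finset.sum_nonneg (fun h _ => by have := hM h; have := hcpos h; positivity)
    _ = ∏ j, x j := hrhs
end

section
/- Let H, J ≥ 1, M_h > 0 for each h, N = ∑_h M_h, and suppose S_{h,j}² = S_j² depends only on the treatment j (between-block homoscedasticity). Then among allocations with M_{h,j} > 0 and ∑_j M_{h,j} = M_h, the product ∏_{j=1}^J S_j² ∑_{h=1}^H (M_h²/N²)/M_{h,j} is minimized by the balanced allocation M_{h,j} = M_h/J. -/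
/-- D-optimality for block designs under between-block homoscedasticity:
the balanced allocation M_{h,j} = M_h/J minimizes
∏_j S_j² ∑_h (M_h²/N²)/M_{h,j}. -/
theorem stmt_9 (H J : ℕ) (hH : 1 ≤ H) (hJ : 1 ≤ J)
    (M : Fin H → ℝ) (hM : ∀ h, 0 < M h)
    (S : Fin J → ℝ) (hS : ∀ j, 0 < S j)
    (N : ℝ) (hN : N = ∑ h, M h)
    (Mm : Fin H → Fin J → ℝ) (hMm : ∀ h j, 0 < Mm h j)
    (hrow : ∀ h, ∑ j, Mm h j = M h) :
    (∏ j, (S j) ^ 2 * ∑ h, (M h) ^ 2 / N ^ 2 / (M h / J)) ≤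
      ∏ j, (S j) ^ 2 * ∑ h, (M h) ^ 2 / N ^ 2 / Mm h j := by
  have hNpos : 0 < N := by
    rw [hN]
    exact Finset.sum_pos (fun h _ => hM h) ⟨⟨0, hH⟩, Finset.mem_univ _⟩
  have hJpos : (0:ℝ) < J := by exact_mod_cast hJ
  set s : Fin J → ℝ := fun j => ∑ h, Mm h j with hs
  have hspos : ∀ j, 0 < s j := fun j =>
    Finset.sum_pos (fun h _ => hMm h j) ⟨⟨0, hH⟩, Finset.mem_univ _⟩
  have hssum : ∑ j, s j = N := by
    rw [hN, hs, Finset.sum_comm]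
    exact Finset.sum_congr rfl fun h _ => hrow h
  -- Cauchy–Schwarz (Engel form): each column sum is at least 1 / s j
  have hA : ∀ j, 1 / s j ≤ ∑ h, (M h) ^ 2 / N ^ 2 / Mm h j := by
    intro j
    have h1 : ∑ h, M h / N = 1 := by
      rw [← Finset.sum_div, ← hN, div_self hNpos.ne']
    have := Finset.sq_sum_div_le_sum_sq_div Finset.univ (fun h => M h / N)
      (g := fun h => Mm h j) (fun h _ => hMm h j)
    rw [h1, one_pow] at this
    simpa [div_pow] using this
  -- AM-GM: ∏ s j ≤ (N/J)^J
  have hprods : ∏ j, s j ≤ (N / J) ^ J := by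
    have hw : ∑ _j : Fin J, (1 / (J:ℝ)) = 1 := by
      rw [Finset.sum_const, Finset.card_univ, Fintype.card_fin, nsmul_eq_mul]
      field_simp
    have hgm := Real.geom_mean_le_arith_mean_weighted Finset.univ (fun _ => 1/(J:ℝ)) s
      (fun _ _ => by positivity) hw (fun j _ => (hspos j).le)
    have hsum : ∑ j, (1/(J:ℝ)) * s j = N / J := by
      rw [← Finset.mul_sum, hssum]; ring
    rw [hsum] at hgm
    have key : ∏ j, s j = (∏ j, s j ^ (1/(J:ℝ))) ^ J := by
      rw [← Finset.prod_pow]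
      refine Finset.prod_congr rfl fun j _ => ?_
      rw [← Real.rpow_natCast (s j ^ (1/(J:ℝ))) J, ← Real.rpow_mul (hspos j).le]
      rw [one_div, inv_mul_cancel₀ hJpos.ne', Real.rpow_one]
    rw [key]
    exact pow_le_pow_left₀ (Finset.prod_nonneg fun j _ => Real.rpow_nonneg (hspos j).le _) hgm J
  -- value of the balanced allocation factor
  have hLfac : (∑ h, (M h) ^ 2 / N ^ 2 / (M h / J)) = (J:ℝ) / N := by
    have h1 : ∀ h : Fin H, (M h) ^ 2 / N ^ 2 / (M h / J) = ((J:ℝ) / N ^ 2) * M h := by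
      intro h
      have := (hM h).ne'
      field_simp
    rw [Finset.sum_congr rfl fun h _ => h1 h, ← Finset.mul_sum, ← hN]
    field_simp
  have hS2 : 0 ≤ ∏ j, (S j) ^ 2 := Finset.prod_nonneg fun j _ => sq_nonneg _
  have hchain : ((J:ℝ) / N) ^ J ≤ ∏ j, ∑ h, (M h) ^ 2 / N ^ 2 / Mm h j := by
    have hps : 0 < ∏ j, s j := Finset.prod_pos fun j _ => hspos j
    have h2 : ((J:ℝ) / N) ^ J ≤ 1 / ∏ j, s j := by
      have hNJ : (0:ℝ) < (N / J) ^ J := pow_pos (div_pos hNpos hJpos) J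
      have : ((J:ℝ) / N) ^ J = 1 / (N / J) ^ J := by
        rw [one_div, ← inv_pow, inv_div]
      rw [this]
      exact one_div_le_one_div_of_le hps hprods
    refine h2.trans ?_
    rw [one_div, ← Finset.prod_inv_distrib]
    refine Finset.prod_le_prod (fun j _ => inv_nonneg.2 (hspos j).le) fun j _ => ?_
    rw [← one_div]
    exact hA j
  calc (∏ j, (S j) ^ 2 * ∑ h, (M h) ^ 2 / N ^ 2 / (M h / J))
      = (∏ j, (S j) ^ 2) * ((J:ℝ) / N) ^ J := by
        simp only [hLfac]
        rw [Finset.prod_mul_distrib, Finset.prod_const, Finset.card_univ, Fintype.card_fin]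
    _ ≤ (∏ j, (S j) ^ 2) * ∏ j, ∑ h, (M h) ^ 2 / N ^ 2 / Mm h j :=
        mul_le_mul_of_nonneg_left hchain hS2
    _ = ∏ j, (S j) ^ 2 * ∑ h, (M h) ^ 2 / N ^ 2 / Mm h j :=
        (Finset.prod_mul_distrib).symm
end

section
/- Let H, J ≥ 1, M_h > 0, N = ∑_h M_h, and suppose S_{h,j}² = S_h² depends only on h. Then among allocations with M_{h,j} > 0 and ∑_j M_{h,j} = M_h, the quantity max_{j} ∑_{h=1}^H (M_h²/N²)·S_h²/M_{h,j} is minimized by the balanced allocation M_{h,j} = M_h/J, with minimum value (J/N²)∑_h M_h S_h². -/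
/-- E-optimality for block designs under within-block homoscedasticity:
the balanced allocation minimizes max_j ∑_h (M_h²/N²)·S_h²/M_{h,j}, with
minimum value (J/N²)·∑_h M_h·S_h². -/
theorem stmt_10 (H J : ℕ) (hH : 1 ≤ H) (hJ : 1 ≤ J)
    (M : Fin H → ℝ) (hM : ∀ h, 0 < M h)
    (S : Fin H → ℝ) (hS : ∀ h, 0 < S h)
    (N : ℝ) (hN : N = ∑ h, M h)
    (Mm : Fin H → Fin J → ℝ) (hMm : ∀ h j, 0 < Mm h j)
    (hrow : ∀ h, ∑ j, Mm h j = M h)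
    (hne : (Finset.univ : Finset (Fin J)).Nonempty) :
    ((J : ℝ) / N ^ 2) * (∑ h, M h * (S h) ^ 2) ≤
      Finset.univ.sup' hne (fun j => ∑ h, (M h) ^ 2 / N ^ 2 * (S h) ^ 2 / Mm h j) ∧
    Finset.univ.sup' hne
        (fun j => ∑ h, (M h) ^ 2 / N ^ 2 * (S h) ^ 2 / (M h / J)) =
      ((J : ℝ) / N ^ 2) * (∑ h, M h * (S h) ^ 2) := by
  have hJ0 : (0:ℝ) < (J:ℝ) := by exact_mod_cast hJ
  have hN0 : 0 < N := by
    rw [hN]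
    exact Finset.sum_pos (fun h _ => hM h) ⟨⟨0, hH⟩, Finset.mem_univ _⟩
  constructor
  · -- max ≥ average ≥ balanced value
    set T := Finset.univ.sup' hne (fun j => ∑ h, (M h) ^ 2 / N ^ 2 * (S h) ^ 2 / Mm h j)
    have hsum_le : (∑ j, ∑ h, (M h) ^ 2 / N ^ 2 * (S h) ^ 2 / Mm h j) ≤ (J:ℝ) * T := by
      calc (∑ j, ∑ h, (M h) ^ 2 / N ^ 2 * (S h) ^ 2 / Mm h j)
          ≤ ∑ _j : Fin J, T :=
            Finset.sum_le_sum (fun j _ => Finset.le_sup' (fun j => ∑ h, (M h) ^ 2 / N ^ 2 * (S h) ^ 2 / Mm h j) (Finset.mem_univ j))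
        _ = (J:ℝ) * T := by simp [mul_comm]
    have hlow : (J:ℝ) * (((J : ℝ) / N ^ 2) * (∑ h, M h * (S h) ^ 2)) ≤
        ∑ j, ∑ h, (M h) ^ 2 / N ^ 2 * (S h) ^ 2 / Mm h j := by
      rw [Finset.sum_comm]
      have key : ∀ h, (J:ℝ) * (((J : ℝ) / N ^ 2) * (M h * (S h) ^ 2)) ≤
          ∑ j, (M h) ^ 2 / N ^ 2 * (S h) ^ 2 / Mm h j := by
        intro h
        have hcs : ((J:ℝ))^2 / M h ≤ ∑ j, 1 / Mm h j := by
          have := Finset.sq_sum_div_le_sum_sq_div (Finset.univ : Finset (Fin J))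
            (fun _ => (1:ℝ)) (g := fun j => Mm h j) (fun j _ => hMm h j)
          simpa [hrow h, one_pow] using this
        have heq : (∑ j, (M h) ^ 2 / N ^ 2 * (S h) ^ 2 / Mm h j) =
            (M h) ^ 2 / N ^ 2 * (S h) ^ 2 * ∑ j, 1 / Mm h j := by
          rw [Finset.mul_sum]
          exact Finset.sum_congr rfl (fun j _ => by ring)
        rw [heq]
        have hc : 0 ≤ (M h) ^ 2 / N ^ 2 * (S h) ^ 2 := by positivity
        calc (J:ℝ) * (((J : ℝ) / N ^ 2) * (M h * (S h) ^ 2))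
            = (M h) ^ 2 / N ^ 2 * (S h) ^ 2 * ((J:ℝ)^2 / M h) := by
              field_simp [(hM h).ne', hN0.ne']
          _ ≤ (M h) ^ 2 / N ^ 2 * (S h) ^ 2 * ∑ j, 1 / Mm h j :=
              mul_le_mul_of_nonneg_left hcs hc
      calc (J:ℝ) * (((J : ℝ) / N ^ 2) * (∑ h, M h * (S h) ^ 2))
          = ∑ h, (J:ℝ) * (((J : ℝ) / N ^ 2) * (M h * (S h) ^ 2)) := by
            simp only [Finset.mul_sum]
        _ ≤ ∑ h, ∑ j, (M h) ^ 2 / N ^ 2 * (S h) ^ 2 / Mm h j :=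
            Finset.sum_le_sum (fun h _ => key h)
    have := hlow.trans hsum_le
    exact le_of_mul_le_mul_left this hJ0
  · -- the balanced allocation gives a constant function
    have hval : ∀ j : Fin J, (∑ h, (M h) ^ 2 / N ^ 2 * (S h) ^ 2 / (M h / J)) =
        ((J : ℝ) / N ^ 2) * (∑ h, M h * (S h) ^ 2) := by
      intro j
      rw [Finset.mul_sum]
      refine Finset.sum_congr rfl (fun h _ => ?_)
      field_simp [(hM h).ne', hN0.ne']
    rw [show (fun j : Fin J => ∑ h, (M h) ^ 2 / N ^ 2 * (S h) ^ 2 / (M h / J)) =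
        (fun _ => ((J : ℝ) / N ^ 2) * (∑ h, M h * (S h) ^ 2)) from funext hval]
    exact Finset.sup'_const hne _
end

section
/- Let S_1,...,S_J > 0, C_1,...,C_J > 0, and C > 0. Among allocations (N_1,...,N_J) with N_j > 0 and ∑_j C_j N_j = C, the product ∏_j S_j²/N_j is minimized when C_j N_j = C/J for each j, i.e., when the budget is split equally across treatment arms. -/
/-! By AM-GM the budget shares `Cost j * Na j`, whose sum is fixed at `C`, have product at most
`(C / J) ^ J`, with equality for the equal split. Hence `∏ Na j` is largest at the equal split,
and the common numerator `∏ S j ^ 2` turns this into the claimed inequality. -/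

open Finset

theorem Real.prod_le_arith_mean_pow_card {ι : Type*} (s : Finset ι) (z : ι → ℝ)
    (hz : ∀ i ∈ s, 0 ≤ z i) : ∏ i ∈ s, z i ≤ ((∑ i ∈ s, z i) / #s) ^ #s := by
  rcases s.eq_empty_or_nonempty with rfl | hs
  · simp
  have hcard : (0 : ℝ) < #s := by exact_mod_cast hs.card_pos
  have hprod : 0 ≤ ∏ i ∈ s, z i := prod_nonneg hz
  have amgm := Real.geom_mean_le_arith_mean s (fun _ ↦ 1) z (fun _ _ ↦ zero_le_one)
    (by simpa using hcard) hz
  simp only [Real.rpow_one, sum_const, nsmul_eq_mul, mul_one, one_mul] at amgm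
  calc ∏ i ∈ s, z i = ((∏ i ∈ s, z i) ^ (#s : ℝ)⁻¹) ^ #s := by
        rw [← Real.rpow_natCast, ← Real.rpow_mul hprod, inv_mul_cancel₀ hcard.ne',
          Real.rpow_one]
    _ ≤ ((∑ i ∈ s, z i) / #s) ^ #s := by gcongr

theorem prod_le_prod_equal_budget_split {ι : Type*} [Fintype ι] (c n : ι → ℝ)
    (hc : ∀ i, 0 < c i) (hn : ∀ i, 0 ≤ n i) :
    ∏ i, n i ≤ ∏ i, (∑ j, c j * n j) / Fintype.card ι / c i := by
  have hcprod : 0 < ∏ i, c i := prod_pos fun i _ ↦ hc i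
  calc ∏ i, n i = (∏ i, c i * n i) / ∏ i, c i := by
        rw [prod_mul_distrib, mul_div_cancel_left₀ _ hcprod.ne']
    _ ≤ ((∑ j, c j * n j) / Fintype.card ι) ^ Fintype.card ι / ∏ i, c i := by
        gcongr
        exact Real.prod_le_arith_mean_pow_card _ _ fun i _ ↦ mul_nonneg (hc i).le (hn i)
    _ = ∏ i, (∑ j, c j * n j) / Fintype.card ι / c i := by
        rw [prod_div_distrib, prod_const, card_univ]

theorem stmt_12_general (J : ℕ) (C : ℝ)
    (S Cost : Fin J → ℝ) (hCost : ∀ j, 0 < Cost j)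
    (Na : Fin J → ℝ) (hNa : ∀ j, 0 < Na j)
    (hsum : ∑ j, Cost j * Na j = C) :
    (∏ j, (S j) ^ 2 / (C / J / Cost j)) ≤ ∏ j, (S j) ^ 2 / Na j := by
  have hsplit : ∏ j, Na j ≤ ∏ j, C / J / Cost j := by
    simpa [hsum] using prod_le_prod_equal_budget_split Cost Na hCost fun j ↦ (hNa j).le
  rw [prod_div_distrib (fun j ↦ S j ^ 2), prod_div_distrib (fun j ↦ S j ^ 2)]
  exact div_le_div_of_nonneg_left (prod_nonneg fun j _ ↦ sq_nonneg (S j))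
    (prod_pos fun j _ ↦ hNa j) hsplit

/-- Cost-constrained D-optimality: subject to ∑ C_j N_j = C, the product
∏ S_j²/N_j is minimized by the equal budget split C_j N_j = C/J. -/
theorem stmt_12 (J : ℕ) (hJ : 1 ≤ J) (C : ℝ) (hC : 0 < C)
    (S Cost : Fin J → ℝ) (hS : ∀ j, 0 < S j) (hCost : ∀ j, 0 < Cost j)
    (Na : Fin J → ℝ) (hNa : ∀ j, 0 < Na j)
    (hsum : ∑ j, Cost j * Na j = C) :
    (∏ j, (S j) ^ 2 / (C / J / Cost j)) ≤ ∏ j, (S j) ^ 2 / Na j :=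
  stmt_12_general J C S Cost hCost Na hNa hsum
end
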